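/- Define a relation Rel on functions ℂ → ℂ by: Rel A B if and only if there exist differentiable functions U, V : ℂ → ℂ with A = U ∘ V and B = V ∘ U (B is an elementary transformation of A). Suppose A and B are related by the equivalence relation generated by Rel (EqvGen Rel A B). Then for every l ≥ 1 there exists a bijection φ from the set P(A, l) = {z ∈ ℂ | A^[l](z) = z and the minimal period of z under A equals l} onto the analogously defined set P(B, l) such that for every z ∈ P(A, l), deriv (A^[l]) z = deriv (B^[l]) (φ z). In particular, equivalent maps have the same multipliers at corresponding periodic points. -/

import Mathlib

open Function Set Finset

private lemma deriv_iterate_prod (f : ℂ → ℂ) (hf : Differentiable ℂ f) (n : ℕ) (z : ℂ) :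
    deriv (f^[n]) z = ∏ i ∈ Finset.range n, deriv f (f^[i] z) := by
  induction n with
  | zero => simp
  | succ n ih =>
    rw [Function.iterate_succ', Finset.prod_range_succ, ← ih,
      deriv_comp (x := z) (hf.differentiableAt) ((hf.iterate n).differentiableAt), mul_comm]

private lemma prod_shift_cyc (g : ℕ → ℂ) (l : ℕ) (hl : 0 < l) (h : g l = g 0) :
    ∏ i ∈ Finset.range l, g (i + 1) = ∏ i ∈ Finset.range l, g i := by
  have h1 : ∏ i ∈ Finset.range l, g (i + 1) = ∏ i ∈ Finset.Ico 1 (l + 1), g i := by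
    rw [Finset.prod_Ico_eq_prod_range]
    simp [add_comm]
  have h2 : ∏ i ∈ Finset.range l, g i = g 0 * ∏ i ∈ Finset.Ico 1 l, g i := by
    rw [Finset.range_eq_Ico]
    exact Finset.prod_eq_prod_Ico_succ_bot hl g
  rw [h1, Finset.prod_Ico_succ_top hl, h, h2, mul_comm]

/-- Main step: one elementary transformation. -/
private lemma step (U V : ℂ → ℂ) (hU : Differentiable ℂ U) (hV : Differentiable ℂ V)
    (l : ℕ) (hl : 1 ≤ l) :
    ∃ φ : ℂ → ℂ,
      Set.BijOn φ
        {z : ℂ | (U ∘ V)^[l] z = z ∧ Function.minimalPeriod (U ∘ V) z = l}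
        {z : ℂ | (V ∘ U)^[l] z = z ∧ Function.minimalPeriod (V ∘ U) z = l} ∧
      ∀ z ∈ {z : ℂ | (U ∘ V)^[l] z = z ∧ Function.minimalPeriod (U ∘ V) z = l},
        deriv ((U ∘ V)^[l]) z = deriv ((V ∘ U)^[l]) (φ z) := by
  obtain ⟨k, rfl⟩ : ∃ k, l = k + 1 := ⟨l - 1, by omega⟩
  clear hl
  set A := U ∘ V with hA
  set B := V ∘ U with hB
  have hsemi : Function.Semiconj V A B := fun x => rfl
  have hsemi' : Function.Semiconj U B A := fun x => rfl
  have hVA : ∀ n x, V (A^[n] x) = B^[n] (V x) := fun n x => hsemi.iterate_right n x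
  have hUB : ∀ n x, U (B^[n] x) = A^[n] (U x) := fun n x => hsemi'.iterate_right n x
  -- key lemma about cycling periods
  have cyc : ∀ (f : ℂ → ℂ) (m : ℕ) (z : ℂ),
      f^[k + 1] z = z → f^[m] (f z) = f z → f^[m] z = z := by
    intro f m z hz hm
    calc f^[m] z = f^[m] (f^[k + 1] z) := by rw [hz]
      _ = f^[m + (k + 1)] z := (Function.iterate_add_apply f m (k + 1) z).symm
      _ = f^[k + (m + 1)] z := by rw [show m + (k + 1) = k + (m + 1) by omega]
      _ = f^[k] (f^[m + 1] z) := Function.iterate_add_apply f k (m + 1) z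
      _ = f^[k] (f^[m] (f z)) := by rw [Function.iterate_succ_apply]
      _ = f^[k] (f z) := by rw [hm]
      _ = f^[k + 1] z := (Function.iterate_succ_apply f k z).symm
      _ = z := hz
  -- forward membership
  have fwd : ∀ z ∈ {z : ℂ | A^[k + 1] z = z ∧ Function.minimalPeriod A z = k + 1},
      V z ∈ {z : ℂ | B^[k + 1] z = z ∧ Function.minimalPeriod B z = k + 1} := by
    rintro z ⟨hz, hmin⟩
    have hBper : B^[k + 1] (V z) = V z := by rw [← hVA, hz]
    refine ⟨hBper, ?_⟩
    set m := Function.minimalPeriod B (V z) with hm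
    have hdvd : m ∣ k + 1 := (show Function.IsPeriodicPt B (k + 1) (V z) from hBper).minimalPeriod_dvd
    have hBm : B^[m] (V z) = V z := Function.isPeriodicPt_minimalPeriod B (V z)
    have hAm : A^[m] (A z) = A z := by
      have h1 : U (B^[m] (V z)) = U (V z) := by rw [hBm]
      rwa [hUB] at h1
    have hAmz : A^[m] z = z := cyc A m z hz hAm
    have : k + 1 ∣ m := by
      rw [← hmin]
      exact (show Function.IsPeriodicPt A m z from hAmz).minimalPeriod_dvd
    exact Nat.dvd_antisymm hdvd this
  have fwd' : ∀ z ∈ {z : ℂ | B^[k + 1] z = z ∧ Function.minimalPeriod B z = k + 1},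
      U z ∈ {z : ℂ | A^[k + 1] z = z ∧ Function.minimalPeriod A z = k + 1} := by
    rintro z ⟨hz, hmin⟩
    have hAper : A^[k + 1] (U z) = U z := by rw [← hUB, hz]
    refine ⟨hAper, ?_⟩
    set m := Function.minimalPeriod A (U z) with hm
    have hdvd : m ∣ k + 1 := (show Function.IsPeriodicPt A (k + 1) (U z) from hAper).minimalPeriod_dvd
    have hAmU : A^[m] (U z) = U z := Function.isPeriodicPt_minimalPeriod A (U z)
    have hBm : B^[m] (B z) = B z := by
      have h1 : V (A^[m] (U z)) = V (U z) := by rw [hAmU]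
      rwa [hVA] at h1
    have hBmz : B^[m] z = z := cyc B m z hz hBm
    have : k + 1 ∣ m := by
      rw [← hmin]
      exact (show Function.IsPeriodicPt B m z from hBmz).minimalPeriod_dvd
    exact Nat.dvd_antisymm hdvd this
  refine ⟨V, ⟨fwd, ?_, ?_⟩, ?_⟩
  · -- injective on P(A, k+1)
    rintro z₁ ⟨hz₁, _⟩ z₂ ⟨hz₂, _⟩ hVz
    have hA12 : A z₁ = A z₂ := by
      show U (V z₁) = U (V z₂); rw [hVz]
    calc z₁ = A^[k + 1] z₁ := hz₁.symm
      _ = A^[k] (A z₁) := Function.iterate_succ_apply A k z₁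
      _ = A^[k] (A z₂) := by rw [hA12]
      _ = A^[k + 1] z₂ := (Function.iterate_succ_apply A k z₂).symm
      _ = z₂ := hz₂
  · -- surjective onto P(B, k+1)
    rintro w ⟨hw, hwmin⟩
    refine ⟨U (B^[k] w), ?_, ?_⟩
    · have hwper : B^[k] w ∈ {z : ℂ | B^[k + 1] z = z ∧ Function.minimalPeriod B z = k + 1} := by
        have hw'per : B^[k + 1] (B^[k] w) = B^[k] w := by
          rw [← Function.iterate_add_apply, add_comm, Function.iterate_add_apply, hw]
        refine ⟨hw'per, ?_⟩
        set m := Function.minimalPeriod B (B^[k] w) with hm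
        have h1 : m ∣ k + 1 :=
          (show Function.IsPeriodicPt B (k + 1) (B^[k] w) from hw'per).minimalPeriod_dvd
        have hmw' : B^[m] (B^[k] w) = B^[k] w := Function.isPeriodicPt_minimalPeriod B (B^[k] w)
        have hmw : B^[m] w = w := by
          calc B^[m] w = B^[m] (B^[k + 1] w) := by rw [hw]
            _ = B^[m + (k + 1)] w := (Function.iterate_add_apply B m (k + 1) w).symm
            _ = B^[(m + k) + 1] w := by rw [show m + (k + 1) = (m + k) + 1 by omega]
            _ = B (B^[m + k] w) := Function.iterate_succ_apply' B (m + k) w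
            _ = B (B^[m] (B^[k] w)) := by rw [Function.iterate_add_apply]
            _ = B (B^[k] w) := by rw [hmw']
            _ = B^[k + 1] w := (Function.iterate_succ_apply' B k w).symm
            _ = w := hw
        have h2 : k + 1 ∣ m := by
          rw [← hwmin]
          exact (show Function.IsPeriodicPt B m w from hmw).minimalPeriod_dvd
        exact Nat.dvd_antisymm h1 h2
      exact fwd' _ hwper
    · show V (U (B^[k] w)) = w
      calc V (U (B^[k] w)) = B (B^[k] w) := rfl
        _ = B^[k + 1] w := (Function.iterate_succ_apply' B k w).symm
        _ = w := hw
  · -- multipliers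
    rintro z ⟨hz, _⟩
    have hAdiff : Differentiable ℂ A := hU.comp hV
    have hBdiff : Differentiable ℂ B := hV.comp hU
    rw [deriv_iterate_prod A hAdiff (k + 1) z, deriv_iterate_prod B hBdiff (k + 1) (V z)]
    have hderA : ∀ i, deriv A (A^[i] z) =
        deriv U (V (A^[i] z)) * deriv V (A^[i] z) := fun i =>
      deriv_comp _ hU.differentiableAt hV.differentiableAt
    have hderB : ∀ i, deriv B (B^[i] (V z)) =
        deriv V (A^[i + 1] z) * deriv U (V (A^[i] z)) := by
      intro i
      have h1 : B^[i] (V z) = V (A^[i] z) := (hVA i z).symm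
      have h2 : deriv B (V (A^[i] z)) =
          deriv V (U (V (A^[i] z))) * deriv U (V (A^[i] z)) :=
        deriv_comp _ hV.differentiableAt hU.differentiableAt
      have h3 : U (V (A^[i] z)) = A^[i + 1] z := by
        rw [Function.iterate_succ_apply']; rfl
      rw [h1, h2, h3]
    have hshift : ∏ i ∈ Finset.range (k + 1), deriv V (A^[i + 1] z)
        = ∏ i ∈ Finset.range (k + 1), deriv V (A^[i] z) := by
      exact prod_shift_cyc (fun i => deriv V (A^[i] z)) (k + 1) (Nat.succ_pos k)
        (by simp only [Function.iterate_zero_apply, hz])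
    calc ∏ i ∈ Finset.range (k + 1), deriv A (A^[i] z)
        = (∏ i ∈ Finset.range (k + 1), deriv U (V (A^[i] z))) *
            ∏ i ∈ Finset.range (k + 1), deriv V (A^[i] z) := by
          rw [← Finset.prod_mul_distrib]; exact Finset.prod_congr rfl fun i _ => hderA i
      _ = (∏ i ∈ Finset.range (k + 1), deriv V (A^[i + 1] z)) *
            ∏ i ∈ Finset.range (k + 1), deriv U (V (A^[i] z)) := by
          rw [hshift, mul_comm]
      _ = ∏ i ∈ Finset.range (k + 1), deriv B (B^[i] (V z)) := by
          rw [← Finset.prod_mul_distrib]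
          exact (Finset.prod_congr rfl fun i _ => hderB i).symm

theorem stmt_5
    (Rel : (ℂ → ℂ) → (ℂ → ℂ) → Prop)
    (hRel : ∀ A B : ℂ → ℂ, Rel A B ↔
      ∃ U V : ℂ → ℂ, Differentiable ℂ U ∧ Differentiable ℂ V ∧ A = U ∘ V ∧ B = V ∘ U)
    (A B : ℂ → ℂ) (h : Relation.EqvGen Rel A B) :
    ∀ l : ℕ, 1 ≤ l → ∃ φ : ℂ → ℂ,
      Set.BijOn φ
        {z : ℂ | A^[l] z = z ∧ Function.minimalPeriod A z = l}
        {z : ℂ | B^[l] z = z ∧ Function.minimalPeriod B z = l} ∧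
      ∀ z ∈ {z : ℂ | A^[l] z = z ∧ Function.minimalPeriod A z = l},
        deriv (A^[l]) z = deriv (B^[l]) (φ z) := by
  induction h with
  | rel A B hAB =>
    intro l hl
    obtain ⟨U, V, hU, hV, hA, hB⟩ := (hRel A B).1 hAB
    subst hA; subst hB
    exact step U V hU hV l hl
  | refl A =>
    intro l hl
    exact ⟨id, Set.bijOn_id _, fun z _ => rfl⟩
  | symm A B _ ih =>
    intro l hl
    obtain ⟨φ, hbij, hmult⟩ := ih l hl
    refine ⟨Function.invFunOn φ {z : ℂ | A^[l] z = z ∧ Function.minimalPeriod A z = l}, ?_, ?_⟩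
    · exact (hbij.invOn_invFunOn).symm.bijOn hbij.surjOn.mapsTo_invFunOn hbij.mapsTo
    · intro w hw
      have hmem := hbij.surjOn.mapsTo_invFunOn hw
      have heq : φ (Function.invFunOn φ {z : ℂ | A^[l] z = z ∧ Function.minimalPeriod A z = l} w)
          = w := hbij.invOn_invFunOn.2 hw
      rw [← heq, ← hmult _ hmem, heq]
  | trans A B C _ _ ihAB ihBC =>
    intro l hl
    obtain ⟨φ₁, hbij₁, hmult₁⟩ := ihAB l hl
    obtain ⟨φ₂, hbij₂, hmult₂⟩ := ihBC l hl
    exact ⟨φ₂ ∘ φ₁, hbij₂.comp hbij₁,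
      fun z hz => (hmult₁ z hz).trans (hmult₂ _ (hbij₁.mapsTo hz))⟩
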